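/- The map exp^{(1)} restricted to U := {(u,v,w) ∈ ℝ³ : u > |v|} is a bijection from U onto the set {(x,y,z) ∈ ℝ³ : x > 0 and −x² + y² + 4|z| < 0}. -/

import Mathlib

open Set

/-- The sub-Lorentzian exponential map of the Heisenberg group at time `t`. -/
noncomputable def heisExp (t : ℝ) (p : ℝ × ℝ × ℝ) : ℝ × ℝ × ℝ :=
  if p.2.2 = 0 then (p.1 * t, p.2.1 * t, 0)
  else
    ((p.2.1 * (Real.cosh (p.2.2 * t) - 1) + p.1 * Real.sinh (p.2.2 * t)) / p.2.2,
     (p.2.1 * Real.sinh (p.2.2 * t) + p.1 * (Real.cosh (p.2.2 * t) - 1)) / p.2.2,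
     ((p.1^2 - p.2.1^2) / 2) * ((Real.sinh (p.2.2 * t) - p.2.2 * t) / p.2.2^2))

namespace HeisAux

noncomputable def G (w : ℝ) : ℝ := if w = 0 then 1 else (Real.exp w - 1) / w

lemma G_pos (w : ℝ) : 0 < G w := by
  unfold G
  split_ifs with h
  · norm_num
  · rcases lt_or_gt_of_ne h with hw | hw
    · apply div_pos_of_neg_of_neg _ hw
      simpa using Real.exp_lt_one_iff.mpr hw  -- exp w - 1 < 0
    · exact div_pos (by simpa using Real.one_lt_exp_iff.mpr hw) hw

noncomputable def phi (w : ℝ) : ℝ :=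
  if w = 0 then 0 else (Real.sinh w - w) / (2 * (Real.cosh w - 1))

lemma denom_pos {w : ℝ} (hw : w ≠ 0) : 0 < 2 * (Real.cosh w - 1) := by
  have := Real.one_lt_cosh.mpr hw
  linarith

lemma phi_zero : phi 0 = 0 := by simp [phi]

lemma phi_neg (w : ℝ) : phi (-w) = -phi w := by
  rcases eq_or_ne w 0 with h | h
  · simp [h, phi]
  · rw [phi, phi, if_neg h, if_neg (neg_ne_zero.mpr h)]
    rw [Real.sinh_neg, Real.cosh_neg,
      show -Real.sinh w - -w = -(Real.sinh w - w) by ring, neg_div]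

lemma phi_pos {w : ℝ} (hw : 0 < w) : 0 < phi w := by
  rw [phi, if_neg hw.ne']
  exact div_pos (by linarith [Real.self_lt_sinh_iff.mpr hw]) (denom_pos hw.ne')

lemma phi_lt_half (w : ℝ) : phi w < 1 / 2 := by
  rcases eq_or_ne w 0 with h | h
  · simp [h, phi]
  · rw [phi, if_neg h, div_lt_iff₀ (denom_pos h)]
    have h1 : Real.cosh w - Real.sinh w = Real.exp (-w) := Real.cosh_sub_sinh w
    have h2 : -w + 1 < Real.exp (-w) := Real.add_one_lt_exp (neg_ne_zero.mpr h)
    linarith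

lemma neg_half_lt_phi (w : ℝ) : -(1 / 2) < phi w := by
  have := phi_lt_half (-w)
  rw [phi_neg] at this
  linarith

lemma abs_phi_lt_half (w : ℝ) : |phi w| < 1 / 2 :=
  abs_lt.mpr ⟨neg_half_lt_phi w, phi_lt_half w⟩

lemma sinh_lt_mul_cosh {w : ℝ} (hw : 0 < w) : Real.sinh w < w * Real.cosh w := by
  have h : StrictMonoOn (fun x : ℝ => x * Real.cosh x - Real.sinh x) (Ici 0) := by
    apply strictMonoOn_of_deriv_pos (convex_Ici _)
    · exact ((continuous_id.mul Real.continuous_cosh).sub Real.continuous_sinh).continuousOn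
    · intro x hx
      rw [interior_Ici, mem_Ioi] at hx
      have h1 : HasDerivAt (fun x : ℝ => x * Real.cosh x - Real.sinh x)
          (1 * Real.cosh x + x * Real.sinh x - Real.cosh x) x :=
        ((hasDerivAt_id x).mul (Real.hasDerivAt_cosh x)).sub (Real.hasDerivAt_sinh x)
      rw [h1.deriv]
      have h2 : 0 < Real.sinh x := Real.sinh_pos_iff.mpr hx
      nlinarith
  have := h (mem_Ici.mpr le_rfl) (mem_Ici.mpr hw.le) hw
  simpa using this

lemma k_pos {w : ℝ} (hw : 0 < w) : 0 < 2 - 2 * Real.cosh w + w * Real.sinh w := by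
  have h : StrictMonoOn (fun x : ℝ => x * Real.sinh x - 2 * Real.cosh x + 2) (Ici 0) := by
    apply strictMonoOn_of_deriv_pos (convex_Ici _)
    · exact (((continuous_id.mul Real.continuous_sinh).sub
        (continuous_const.mul Real.continuous_cosh)).add continuous_const).continuousOn
    · intro x hx
      rw [interior_Ici, mem_Ioi] at hx
      have h1 : HasDerivAt (fun x : ℝ => x * Real.sinh x - 2 * Real.cosh x + 2)
          (1 * Real.sinh x + x * Real.cosh x - 2 * Real.sinh x) x :=
        (((hasDerivAt_id x).mul (Real.hasDerivAt_sinh x)).sub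
          ((Real.hasDerivAt_cosh x).const_mul 2)).add_const 2
      rw [h1.deriv]
      have h2 := sinh_lt_mul_cosh hx
      nlinarith
  have := h (mem_Ici.mpr le_rfl) (mem_Ici.mpr hw.le) hw
  simp only [Real.sinh_zero, Real.cosh_zero] at this
  nlinarith

lemma phi_contOn : ContinuousOn phi (Ioi 0) := by
  have : EqOn (fun w => (Real.sinh w - w) / (2 * (Real.cosh w - 1))) phi (Ioi 0) := by
    intro w hw
    rw [phi, if_neg (ne_of_gt (mem_Ioi.mp hw))]
  apply ContinuousOn.congr _ this.symm
  · apply ContinuousOn.div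
    · exact (Real.continuous_sinh.sub continuous_id).continuousOn
    · exact (continuous_const.mul (Real.continuous_cosh.sub continuous_const)).continuousOn
    · exact fun x hx => (denom_pos (ne_of_gt (mem_Ioi.mp hx))).ne'

lemma phi_hasDeriv {x : ℝ} (hx : x ≠ 0) :
    HasDerivAt phi
      (((Real.cosh x - 1) * (2 * (Real.cosh x - 1)) -
        (Real.sinh x - x) * (2 * Real.sinh x)) / (2 * (Real.cosh x - 1)) ^ 2) x := by
  have h1 : HasDerivAt (fun w : ℝ => Real.sinh w - w) (Real.cosh x - 1) x :=
    (Real.hasDerivAt_sinh x).sub (hasDerivAt_id x)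
  have h2 : HasDerivAt (fun w : ℝ => 2 * (Real.cosh w - 1)) (2 * Real.sinh x) x :=
    ((Real.hasDerivAt_cosh x).sub_const 1).const_mul 2
  have h := h1.div h2 (denom_pos hx).ne'
  apply h.congr_of_eventuallyEq
  filter_upwards [eventually_ne_nhds hx] with w hw
  rw [phi, if_neg hw]
  rfl

lemma phi_strictMonoOn : StrictMonoOn phi (Ioi 0) := by
  apply strictMonoOn_of_deriv_pos (convex_Ioi 0) phi_contOn
  intro x hx
  rw [interior_Ioi, mem_Ioi] at hx
  rw [(phi_hasDeriv hx.ne').deriv]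
  apply div_pos _ (pow_pos (denom_pos hx.ne') 2)
  have h1 := k_pos hx
  have h2 : Real.cosh x ^ 2 - Real.sinh x ^ 2 = 1 := Real.cosh_sq_sub_sinh_sq x
  nlinarith

lemma phi_strictMono : StrictMono phi := by
  intro a b hab
  rcases lt_trichotomy a 0 with ha | ha | ha
  · have hpa : phi a < 0 := by
      have := phi_pos (by linarith : (0:ℝ) < -a)
      rw [phi_neg] at this; linarith
    rcases lt_trichotomy b 0 with hb | hb | hb
    · have : phi (-b) < phi (-a) := phi_strictMonoOn (by simpa using hb) (by simpa using ha)
        (by linarith)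
      rw [phi_neg, phi_neg] at this; linarith
    · rw [hb, phi_zero]; exact hpa
    · exact lt_trans hpa (phi_pos hb)
  · rw [ha, phi_zero]; exact phi_pos (ha ▸ hab)
  · exact phi_strictMonoOn (mem_Ioi.mpr ha) (mem_Ioi.mpr (lt_trans ha hab)) hab

lemma phi_lt_self {w : ℝ} (hw : 0 < w) : phi w < w := by
  rw [phi, if_neg hw.ne', div_lt_iff₀ (denom_pos hw.ne')]
  have h1 := sinh_lt_mul_cosh hw
  have h2 := Real.one_lt_cosh.mpr hw.ne'
  nlinarith

lemma phi_surj {r : ℝ} (hr : |r| < 1 / 2) : ∃ w, phi w = r := by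
  have key : ∀ s : ℝ, 0 < s → s < 1 / 2 → ∃ w, phi w = s := by
    intro s hs hs2
    have hcpos : 0 < 1 - 2 * s := by linarith
    set W : ℝ := 16 / (1 - 2 * s) + 8 with hWdef
    have h16 : 0 < 16 / (1 - 2 * s) := by positivity
    have hW8 : (8 : ℝ) ≤ W := by rw [hWdef]; linarith
    have hsW : s ≤ W := by linarith
    have hcW : 16 ≤ (1 - 2 * s) * W := by
      rw [hWdef, mul_add]
      have : (1 - 2 * s) * (16 / (1 - 2 * s)) = 16 := by field_simp
      nlinarith
    have hWpos : 0 < W := by linarith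
    clear_value W
    have hyp : 16 * W ≤ (1 - 2 * s) * W * W :=
      le_trans (by nlinarith) (mul_le_mul_of_nonneg_right hcW hWpos.le)
    have hupper : s < phi W := by
      rw [phi, if_neg hWpos.ne', lt_div_iff₀ (denom_pos hWpos.ne')]
      have e1 : Real.cosh W - Real.sinh W = Real.exp (-W) := Real.cosh_sub_sinh W
      have e2 : Real.exp (-W) ≤ 1 := Real.exp_le_one_iff.mpr (by linarith)
      have e3 : 1 + W / 2 ≤ Real.exp (W / 2) := by
        have := Real.add_one_le_exp (W / 2); linarith
      have e4 : Real.exp (W / 2) * Real.exp (W / 2) = Real.exp W := by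
        rw [← Real.exp_add]; ring_nf
      have e5 : (1 + W / 2) * (1 + W / 2) ≤ Real.exp W := by
        rw [← e4]
        have : 0 ≤ 1 + W / 2 := by linarith
        exact mul_le_mul e3 e3 this (Real.exp_pos _).le
      have e6 : Real.exp W ≤ 2 * Real.cosh W := by
        rw [Real.cosh_eq]
        have := Real.exp_pos (-W)
        linarith
      have e7 : (1 - 2 * s) * ((1 + W / 2) * (1 + W / 2)) ≤ (1 - 2 * s) * (2 * Real.cosh W) :=
        mul_le_mul_of_nonneg_left (le_trans e5 e6) hcpos.le
      nlinarith [e7, hyp, hcW, e1, e2, hs, hW8]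
    have hlower : phi s < s := phi_lt_self hs
    have hmem : s ∈ Icc (phi s) (phi W) := ⟨hlower.le, hupper.le⟩
    have hsub : Icc s W ⊆ Ioi 0 := fun x hx => lt_of_lt_of_le hs hx.1
    have := intermediate_value_Icc hsW (phi_contOn.mono hsub) hmem
    obtain ⟨w, _, hw⟩ := this
    exact ⟨w, hw⟩
  rcases lt_trichotomy r 0 with h | h | h
  · obtain ⟨w, hw⟩ := key (-r) (by linarith) (by rw [abs_of_neg h] at hr; linarith)
    exact ⟨-w, by rw [phi_neg, hw, neg_neg]⟩
  · exact ⟨0, by rw [phi_zero, h]⟩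
  · exact key r h (by rwa [abs_of_pos h] at hr)

lemma exG_pos (w : ℝ) : 0 < Real.exp (-w) * G w := mul_pos (Real.exp_pos _) (G_pos w)

lemma hx_add (u v w : ℝ) :
    (heisExp 1 (u, v, w)).1 + (heisExp 1 (u, v, w)).2.1 = (u + v) * G w := by
  rw [heisExp, G]
  split_ifs with h
  · have h' : w = 0 := h
    subst h'; norm_num
  · simp only [mul_one]
    rw [Real.cosh_eq, Real.sinh_eq]
    have he := Real.exp_ne_zero w
    field_simp
    ring

lemma hx_sub (u v w : ℝ) :
    (heisExp 1 (u, v, w)).1 - (heisExp 1 (u, v, w)).2.1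
      = (u - v) * (Real.exp (-w) * G w) := by
  rw [heisExp, G]
  split_ifs with h
  · have h' : w = 0 := h
    subst h'; norm_num
  · simp only [mul_one]
    rw [Real.cosh_eq, Real.sinh_eq, Real.exp_neg]
    have he := Real.exp_ne_zero w
    field_simp
    ring

lemma GGphi {w : ℝ} (h : w ≠ 0) :
    Real.exp (-w) * (G w * G w) * phi w = (Real.sinh w - w) / w ^ 2 := by
  rw [G, phi, if_neg h, if_neg h]
  have key : Real.exp (-w) * ((Real.exp w - 1) / w * ((Real.exp w - 1) / w))
      = 2 * (Real.cosh w - 1) / w ^ 2 := by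
    rw [Real.cosh_eq, Real.exp_neg]
    have he := Real.exp_ne_zero w
    field_simp
    ring
  rw [key]
  have hd := (denom_pos h).ne'
  rw [div_mul_div_comm, mul_comm (2 * (Real.cosh w - 1)), mul_div_mul_right _ _ hd]

lemma hx_z (u v w : ℝ) :
    (heisExp 1 (u, v, w)).2.2 =
      ((u + v) * G w) * ((u - v) * (Real.exp (-w) * G w)) / 2 * phi w := by
  rcases eq_or_ne w 0 with h | h
  · simp [heisExp, h, phi_zero]
  · have key := GGphi h
    rw [heisExp, if_neg h]
    simp only [mul_one]
    calc ((u ^ 2 - v ^ 2) / 2) * ((Real.sinh w - w) / w ^ 2)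
        = ((u ^ 2 - v ^ 2) / 2) * (Real.exp (-w) * (G w * G w) * phi w) := by rw [key]
      _ = ((u + v) * G w) * ((u - v) * (Real.exp (-w) * G w)) / 2 * phi w := by ring

end HeisAux

open HeisAux in
/-- `exp^{(1)}` restricted to `U = {(u,v,w) : u > |v|}` is a bijection
onto the chronological future `{(x,y,z) : x > 0 and −x² + y² + 4|z| < 0}` of the origin. -/
theorem heisExp_bijOn :
    BijOn (heisExp 1) {p : ℝ × ℝ × ℝ | |p.2.1| < p.1}
      {q : ℝ × ℝ × ℝ | 0 < q.1 ∧ -q.1^2 + q.2.1^2 + 4 * |q.2.2| < 0} := by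

  constructor
  · -- MapsTo
    rintro ⟨u, v, w⟩ hp
    simp only [mem_setOf_eq] at hp ⊢
    obtain ⟨hv1, hv2⟩ := abs_lt.mp hp
    have ha : 0 < u + v := by linarith
    have hb : 0 < u - v := by linarith
    have h1 := hx_add u v w
    have h2 := hx_sub u v w
    have h3 := hx_z u v w
    have hG := G_pos w
    have heG := exG_pos w
    have hXpos : 0 < (heisExp 1 (u, v, w)).1 + (heisExp 1 (u, v, w)).2.1 := by
      rw [h1]; positivity
    have hYpos : 0 < (heisExp 1 (u, v, w)).1 - (heisExp 1 (u, v, w)).2.1 := by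
      rw [h2]; positivity
    have hP : 0 < (u + v) * G w * ((u - v) * (Real.exp (-w) * G w)) / 2 := by positivity
    refine ⟨by linarith, ?_⟩
    have habs : |(heisExp 1 (u, v, w)).2.2|
        = ((u + v) * G w * ((u - v) * (Real.exp (-w) * G w)) / 2) * |phi w| := by
      rw [h3, abs_mul, abs_of_pos hP]
    have hphi := abs_phi_lt_half w
    have hsq : (heisExp 1 (u, v, w)).1 ^ 2 - (heisExp 1 (u, v, w)).2.1 ^ 2
        = ((heisExp 1 (u, v, w)).1 + (heisExp 1 (u, v, w)).2.1)
          * ((heisExp 1 (u, v, w)).1 - (heisExp 1 (u, v, w)).2.1) := by ring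
    rw [h1, h2] at hsq
    have h2P : (heisExp 1 (u, v, w)).1 ^ 2 - (heisExp 1 (u, v, w)).2.1 ^ 2
        = 2 * ((u + v) * G w * ((u - v) * (Real.exp (-w) * G w)) / 2) := by
      rw [hsq]; ring
    nlinarith [mul_lt_mul_of_pos_left hphi hP, abs_nonneg (phi w)]
  constructor
  · -- InjOn
    rintro ⟨u, v, w⟩ hp ⟨u', v', w'⟩ hp' heq
    simp only [mem_setOf_eq] at hp hp'
    obtain ⟨hv1, hv2⟩ := abs_lt.mp hp
    obtain ⟨hv1', hv2'⟩ := abs_lt.mp hp'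
    have ha : 0 < u + v := by linarith
    have hb : 0 < u - v := by linarith
    have c1 : (heisExp 1 (u, v, w)).1 = (heisExp 1 (u', v', w')).1 := by rw [heq]
    have c2 : (heisExp 1 (u, v, w)).2.1 = (heisExp 1 (u', v', w')).2.1 := by rw [heq]
    have c3 : (heisExp 1 (u, v, w)).2.2 = (heisExp 1 (u', v', w')).2.2 := by rw [heq]
    have e1 : (u + v) * G w = (u' + v') * G w' := by
      rw [← hx_add, ← hx_add, c1, c2]
    have e2 : (u - v) * (Real.exp (-w) * G w) = (u' - v') * (Real.exp (-w') * G w') := by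
      rw [← hx_sub, ← hx_sub, c1, c2]
    have e3 := c3
    rw [hx_z, hx_z] at e3
    rw [← e1, ← e2] at e3
    have hX : 0 < (u + v) * G w := mul_pos ha (G_pos w)
    have hY : 0 < (u - v) * (Real.exp (-w) * G w) := mul_pos hb (exG_pos w)
    have hww : w = w' := by
      apply phi_strictMono.injective
      have hP : (u + v) * G w * ((u - v) * (Real.exp (-w) * G w)) / 2 ≠ 0 := by positivity
      exact mul_left_cancel₀ hP e3
    subst hww
    have huv : u + v = u' + v' := mul_right_cancel₀ (G_pos w).ne' e1
    have huv2 : u - v = u' - v' := mul_right_cancel₀ (exG_pos w).ne' e2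
    have : u = u' := by linarith
    have : v = v' := by linarith
    simp_all
  · -- SurjOn
    rintro ⟨x, y, z⟩ hq
    simp only [mem_setOf_eq] at hq
    obtain ⟨hx, hlt⟩ := hq
    have hzabs := abs_nonneg z
    have hX : 0 < x + y := by nlinarith [sq_nonneg (x + y), sq_nonneg (x - y)]
    have hY : 0 < x - y := by nlinarith [sq_nonneg (x + y), sq_nonneg (x - y)]
    have hXY : 0 < (x + y) * (x - y) := mul_pos hX hY
    have h4 : 4 * |z| < (x + y) * (x - y) := by nlinarith
    have hr : |2 * z / ((x + y) * (x - y))| < 1 / 2 := by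
      rw [abs_div, abs_of_pos hXY, div_lt_iff₀ hXY, abs_mul]
      simp only [Nat.abs_ofNat]
      linarith
    obtain ⟨w, hw⟩ := phi_surj hr
    have hG := G_pos w
    have heG := exG_pos w
    set a : ℝ := (x + y) / G w with hadef
    set b : ℝ := (x - y) / (Real.exp (-w) * G w) with hbdef
    have hapos : 0 < a := div_pos hX hG
    have hbpos : 0 < b := div_pos hY heG
    refine ⟨((a + b) / 2, (a - b) / 2, w), ?_, ?_⟩
    · simp only [mem_setOf_eq]
      rw [abs_lt]
      constructor <;> [linarith; linarith]
    · have h1 := hx_add ((a + b) / 2) ((a - b) / 2) w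
      have h2 := hx_sub ((a + b) / 2) ((a - b) / 2) w
      have h3 := hx_z ((a + b) / 2) ((a - b) / 2) w
      have ea : (a + b) / 2 + (a - b) / 2 = a := by ring
      have eb : (a + b) / 2 - (a - b) / 2 = b := by ring
      rw [ea] at h1 h3
      rw [eb] at h2 h3
      have haG : a * G w = x + y := by rw [hadef]; field_simp
      have hbG : b * (Real.exp (-w) * G w) = x - y := by rw [hbdef]; field_simp
      rw [haG] at h1 h3
      rw [hbG] at h2 h3
      have hz3 : (heisExp 1 ((a + b) / 2, (a - b) / 2, w)).2.2 = z := by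
        rw [h3, hw]
        field_simp
      have hx1 : (heisExp 1 ((a + b) / 2, (a - b) / 2, w)).1 = x := by linarith
      have hy1 : (heisExp 1 ((a + b) / 2, (a - b) / 2, w)).2.1 = y := by linarith
      exact Prod.ext_iff.mpr ⟨hx1, Prod.ext_iff.mpr ⟨hy1, hz3⟩⟩
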